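/- Fix 0 < δ < 1/2, 0 < λ ≤ 1 ≤ Λ, Q = 2n+2, and a non-decreasing function ω : [0,1) → [0,1) with ω(0) = 0 and ω(s) → 0 as s → 0⁺. There exists ε₀ > 0, depending only on λ, Λ, Q, δ and ω, with the following property: for every open set Ω ⊆ ℝ^{2n+1}, every A ∈ M_n(λ,Λ,Ω) ∩ C(Ω,ω) which is symplectic, and every z₀ ∈ Ω, setting M := A(z₀), α := (Q−2)/4 + δ, and g(ζ) := −(1/α)·φ_M(ζ)^{−α} for ζ ≠ 0, one has −tr(A(z)·(D²_H g)(ζ)) ≥ 0 for all z ∈ B_{ε₀}(z₀) ∩ Ω and all ζ ≠ 0. -/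

import Mathlib

open MeasureTheory Set Matrix

noncomputable section

/-- Points of the Heisenberg group `ℍⁿ = ℝ^{2n} × ℝ`, written `z = (x, t)`. -/
abbrev Hpt (n : ℕ) := (Fin (2 * n) → ℝ) × ℝ

/-- The standard symplectic matrix `J = (0, -Iₙ; Iₙ, 0)`. -/
def Jmat (n : ℕ) : Matrix (Fin (2 * n)) (Fin (2 * n)) ℝ :=
  Matrix.of fun i j =>
    if (i : ℕ) + n = (j : ℕ) then (-1 : ℝ) else if (j : ℕ) + n = (i : ℕ) then 1 else 0

/-- The Heisenberg group law `(x,t) ∘ (ξ,τ) = (x + ξ, t + τ + 2⟨Jx, ξ⟩)`. -/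
def hmul {n : ℕ} (z w : Hpt n) : Hpt n :=
  (z.1 + w.1, z.2 + w.2 + 2 * ((Jmat n).mulVec z.1 ⬝ᵥ w.1))

/-- The direction vector of the horizontal vector field `Xᵢ = ∂_{xᵢ} + 2(Jx)ᵢ ∂_t`
at a point with horizontal coordinates `x`. -/
def Xvec {n : ℕ} (x : Fin (2 * n) → ℝ) (i : Fin (2 * n)) : Hpt n :=
  (Pi.single i 1, 2 * (Jmat n).mulVec x i)

/-- The horizontal derivative `Xᵢ ψ`. -/
def Xd {n : ℕ} (i : Fin (2 * n)) (ψ : Hpt n → ℝ) (z : Hpt n) : ℝ :=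
  fderiv ℝ ψ z (Xvec z.1 i)

/-- The horizontal gradient `∇_H ψ = (X₁ψ, …, X_{2n}ψ)`. -/
def gradH {n : ℕ} (ψ : Hpt n → ℝ) (z : Hpt n) : Fin (2 * n) → ℝ := fun i => Xd i ψ z

/-- The operator `𝓛_A ψ = Σ_{i,j} a_{ij}(z) XᵢXⱼψ` for a (variable) coefficient matrix `A`. -/
def Lop {n : ℕ} (A : Hpt n → Matrix (Fin (2 * n)) (Fin (2 * n)) ℝ) (ψ : Hpt n → ℝ)
    (z : Hpt n) : ℝ :=
  ∑ i, ∑ j, A z i j * Xd i (Xd j ψ) z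

/-- `φ_M(x,t) = ⟨M⁻¹x, x⟩² + t²`. -/
def phiM {n : ℕ} (M : Matrix (Fin (2 * n)) (Fin (2 * n)) ℝ) (z : Hpt n) : ℝ :=
  (M⁻¹.mulVec z.1 ⬝ᵥ z.1) ^ 2 + z.2 ^ 2

/-- A matrix `M` is symplectic if `M⁻¹ = Jᵗ M J`. -/
def IsSymplecticMat {n : ℕ} (M : Matrix (Fin (2 * n)) (Fin (2 * n)) ℝ) : Prop :=
  M⁻¹ = (Jmat n)ᵀ * M * Jmat n


/-- Inverse in the Heisenberg group: `(x,t)⁻¹ = (-x,-t)`. -/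
def hinv {n : ℕ} (z : Hpt n) : Hpt n := (-z.1, -z.2)

/-- The homogeneous symmetric norm `ρ(x,t) = (|x|⁴ + t²)^{1/4}`. -/
def rho {n : ℕ} (z : Hpt n) : ℝ := ((∑ i, z.1 i ^ 2) ^ 2 + z.2 ^ 2) ^ ((4 : ℝ)⁻¹)

/-- The left-invariant (quasi-)distance `d(z,ζ) = ρ(ζ⁻¹ ∘ z)`. -/
def hdist {n : ℕ} (z w : Hpt n) : ℝ := rho (hmul (hinv w) z)

/-- The Koranyi ball `B_R(z)`. -/
def kball {n : ℕ} (z : Hpt n) (R : ℝ) : Set (Hpt n) := {w | hdist z w < R}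

/-- The modified homogeneous norm `ρ_M = φ_M^{1/4}`. -/
def rhoM {n : ℕ} (M : Matrix (Fin (2 * n)) (Fin (2 * n)) ℝ) (z : Hpt n) : ℝ :=
  phiM M z ^ ((4 : ℝ)⁻¹)

/-- The modified (quasi-)distance `d_M(z,ζ) = ρ_M(ζ⁻¹ ∘ z)`. -/
def dM {n : ℕ} (M : Matrix (Fin (2 * n)) (Fin (2 * n)) ℝ) (z w : Hpt n) : ℝ :=
  rhoM M (hmul (hinv w) z)

/-- The ball `B^M_r(z)` for the modified distance `d_M`. -/
def kballM {n : ℕ} (M : Matrix (Fin (2 * n)) (Fin (2 * n)) ℝ) (z : Hpt n) (r : ℝ) :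
    Set (Hpt n) := {w | dM M z w < r}

/-- Loewner order on symmetric matrices: `P ≤ Q` iff `Q - P` is positive semidefinite. -/
def matLE {m : ℕ} (P Q : Matrix (Fin m) (Fin m) ℝ) : Prop := (Q - P).PosSemidef

/-- The symmetrized horizontal Hessian `D²_H ψ = (X_{i,j} ψ)_{ij}`,
`X_{i,j}ψ = ½(XᵢXⱼψ + XⱼXᵢψ)`. -/
def D2H {n : ℕ} (ψ : Hpt n → ℝ) (z : Hpt n) : Matrix (Fin (2 * n)) (Fin (2 * n)) ℝ :=
  Matrix.of fun i j => (Xd i (Xd j ψ) z + Xd j (Xd i ψ) z) / 2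

/-- The operator norm of a matrix, i.e. the norm of the induced operator on
Euclidean space. -/
def matNorm {m : ℕ} (M : Matrix (Fin m) (Fin m) ℝ) : ℝ :=
  ‖Matrix.toEuclideanCLM (𝕜 := ℝ) M‖

/-- The class `M_n(λ,Λ,Ω)`: symmetric matrix-valued functions of unit determinant with
`λ I ≤ A(z) ≤ Λ I` on `Ω`. -/
def MClass {n : ℕ} (lam Lam : ℝ) (Ω : Set (Hpt n))
    (A : Hpt n → Matrix (Fin (2 * n)) (Fin (2 * n)) ℝ) : Prop :=
  ∀ z ∈ Ω, (A z).IsSymm ∧ (A z).det = 1 ∧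
    matLE (lam • (1 : Matrix (Fin (2 * n)) (Fin (2 * n)) ℝ)) (A z) ∧
    matLE (A z) (Lam • (1 : Matrix (Fin (2 * n)) (Fin (2 * n)) ℝ))

/-- The class `C(Ω,ω)`: continuous matrix-valued functions whose modulus of continuity
`ω_A(z₀;ε) = sup_{z ∈ B_ε(z₀) ∩ Ω} ‖A(z) - A(z₀)‖` is bounded by `ω(ε)` for all
`z₀ ∈ Ω` and `0 < ε < 1`. -/
def CClass {n : ℕ} (ω : ℝ → ℝ) (Ω : Set (Hpt n))
    (A : Hpt n → Matrix (Fin (2 * n)) (Fin (2 * n)) ℝ) : Prop :=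
  ContinuousOn A Ω ∧
    ∀ z₀ ∈ Ω, ∀ ε : ℝ, 0 < ε → ε < 1 → ∀ z ∈ kball z₀ ε ∩ Ω, matNorm (A z - A z₀) ≤ ω ε

/-- `A` is symplectic on `Ω`: `A(z)⁻¹ = Jᵗ A(z) J` for all `z ∈ Ω`. -/
def SymplecticOn {n : ℕ} (Ω : Set (Hpt n))
    (A : Hpt n → Matrix (Fin (2 * n)) (Fin (2 * n)) ℝ) : Prop :=
  ∀ z ∈ Ω, IsSymplecticMat (A z)

/-- A modulus `ω : [0,1) → [0,1)`, non-decreasing, with `ω(0) = 0` and `ω(0⁺) = 0`. -/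
def IsModulus (ω : ℝ → ℝ) : Prop :=
  MonotoneOn ω (Set.Ico (0 : ℝ) 1) ∧ (∀ s ∈ Set.Ico (0 : ℝ) 1, 0 ≤ ω s ∧ ω s < 1) ∧
    ω 0 = 0 ∧ Filter.Tendsto ω (nhdsWithin 0 (Set.Ioi 0)) (nhds 0)

/-- The barrier kernel `g(ζ) = -(1/α)·φ_M(ζ)^{-α}`. -/
def gfun {n : ℕ} (M : Matrix (Fin (2 * n)) (Fin (2 * n)) ℝ) (α : ℝ) (ζ : Hpt n) : ℝ :=
  -(1 / α) * phiM M ζ ^ (-α : ℝ)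

/-- The conclusion of the subsolution lemma (Lemma 3.6): for all open `Ω`, all symplectic
`A ∈ M_n(λ,Λ,Ω) ∩ C(Ω,ω)` and `z₀ ∈ Ω`, with `M = A(z₀)`, `α = (Q-2)/4 + δ` and
`g = -(1/α)·φ_M^{-α}`, one has `-tr(A(z)·(D²_H g)(ζ)) ≥ 0` for all `z ∈ B_{ε₀}(z₀) ∩ Ω`
and all `ζ ≠ 0`. -/
def SubsolProp (n : ℕ) (lam Lam δ : ℝ) (ω : ℝ → ℝ) (ε₀ : ℝ) : Prop :=
  ∀ (Ω : Set (Hpt n)), IsOpen Ω →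
    ∀ A : Hpt n → Matrix (Fin (2 * n)) (Fin (2 * n)) ℝ,
      MClass lam Lam Ω A → CClass ω Ω A → SymplecticOn Ω A →
        ∀ z₀ ∈ Ω, ∀ z ∈ kball z₀ ε₀ ∩ Ω, ∀ ζ : Hpt n, ζ ≠ 0 →
          0 ≤ -(A z * D2H (gfun (A z₀) ((2 * (n : ℝ) + 2 - 2) / 4 + δ)) ζ).trace


namespace Stmt8Aux

open Matrix

/-! ### Linear algebra facts about `Jmat` -/

lemma Jmat_apply (n : ℕ) (i j : Fin (2*n)) :
    Jmat n i j = if (i : ℕ) + n = (j : ℕ) then (-1 : ℝ)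
      else if (j : ℕ) + n = (i : ℕ) then 1 else 0 := rfl

lemma Jmat_antisymm (n : ℕ) (i j : Fin (2*n)) : Jmat n i j = - Jmat n j i := by
  have hi := i.isLt; have hj := j.isLt
  rw [Jmat_apply, Jmat_apply]
  by_cases h1 : (i:ℕ)+n=(j:ℕ)
  · have h2 : ¬((j:ℕ)+n=(i:ℕ)) := by omega
    rw [if_pos h1, if_neg h2, if_pos h1]; try norm_num
  · by_cases h2 : (j:ℕ)+n=(i:ℕ)
    · rw [if_neg h1, if_pos h2, if_pos h2]; try norm_num
    · rw [if_neg h1, if_neg h2, if_neg h2, if_neg h1]; try norm_num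

lemma Jmat_mul_Jmat (n : ℕ) : Jmat n * Jmat n = -1 := by
  ext i k
  have hi := i.isLt; have hk := k.isLt
  rw [Matrix.mul_apply]
  have goalrhs : (-1 : Matrix (Fin (2*n)) (Fin (2*n)) ℝ) i k
      = -(if i = k then (1:ℝ) else 0) := by
    simp [Matrix.one_apply]
  rw [goalrhs]
  rcases lt_or_ge (i:ℕ) n with hin | hin
  · have hjlt : ((i:ℕ) + n) < 2*n := by omega
    set j₀ : Fin (2*n) := ⟨(i:ℕ)+n, hjlt⟩ with hj₀
    have hv : (j₀ : ℕ) = (i:ℕ) + n := rfl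
    rw [Finset.sum_eq_single j₀]
    · rw [Jmat_apply, Jmat_apply]
      have c1 : (i:ℕ) + n = (j₀:ℕ) := rfl
      rw [if_pos c1, hv]
      have c2 : ¬ ((i:ℕ) + n + n = (k:ℕ)) := by omega
      rw [if_neg c2]
      have c3 : ((k:ℕ) + n = (i:ℕ) + n) ↔ (i = k) := by
        constructor
        · intro h; exact Fin.ext (by omega)
        · intro h; subst h; rfl
      by_cases hik : i = k
      · rw [if_pos (c3.mpr hik), if_pos hik]; norm_num
      · rw [if_neg (fun h => hik (c3.mp h)), if_neg hik]; norm_num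
    · intro j _ hjne
      have c1 : ¬ ((i:ℕ) + n = (j:ℕ)) := by
        intro h; exact hjne (Fin.ext (by rw [hv, ← h]))
      have c2 : ¬ ((j:ℕ) + n = (i:ℕ)) := by have := j.isLt; omega
      rw [Jmat_apply, if_neg c1, if_neg c2, zero_mul]
    · intro h; exact absurd (Finset.mem_univ _) h
  · have hjlt : ((i:ℕ) - n) < 2*n := by omega
    set j₀ : Fin (2*n) := ⟨(i:ℕ)-n, hjlt⟩ with hj₀
    have hv : (j₀ : ℕ) = (i:ℕ) - n := rfl
    rw [Finset.sum_eq_single j₀]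
    · rw [Jmat_apply, Jmat_apply, hv]
      have c1 : ¬ ((i:ℕ) + n = (i:ℕ) - n) := by omega
      have c2 : (i:ℕ) - n + n = (i:ℕ) := by omega
      rw [if_neg c1, if_pos c2, one_mul]
      have c3 : ((i:ℕ) - n + n = (k:ℕ)) ↔ (i = k) := by
        constructor
        · intro h; exact Fin.ext (by omega)
        · intro h; subst h; omega
      have c4 : ¬ ((k:ℕ) + n = (i:ℕ) - n) := by omega
      by_cases hik : i = k
      · rw [if_pos (c3.mpr hik), if_pos hik]
      · rw [if_neg (fun h => hik (c3.mp h)), if_neg c4, if_neg hik]; norm_num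
    · intro j _ hjne
      have c1 : ¬ ((i:ℕ) + n = (j:ℕ)) := by have := j.isLt; omega
      have c2 : ¬ ((j:ℕ) + n = (i:ℕ)) := by
        intro h; exact hjne (Fin.ext (by rw [hv]; omega))
      rw [Jmat_apply, if_neg c1, if_neg c2, zero_mul]
    · intro h; exact absurd (Finset.mem_univ _) h

lemma Jmat_transpose (n : ℕ) : (Jmat n)ᵀ = - Jmat n := by
  ext i j; rw [Matrix.transpose_apply, Jmat_antisymm n j i]; rfl

lemma Jmat_transpose_mul (n : ℕ) : (Jmat n)ᵀ * Jmat n = 1 := by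
  rw [Jmat_transpose, Matrix.neg_mul, Jmat_mul_Jmat]; simp

/-! ### Norm and positivity facts -/

variable {m : ℕ}

lemma dshift (N : Matrix (Fin m) (Fin m) ℝ) (v w : Fin m → ℝ) :
    v ⬝ᵥ N.mulVec w = Nᵀ.mulVec v ⬝ᵥ w := by
  rw [Matrix.dotProduct_mulVec, ← Matrix.vecMul_transpose, Matrix.transpose_transpose]

lemma dot_self_nonneg (a : Fin m → ℝ) : 0 ≤ a ⬝ᵥ a :=
  Finset.sum_nonneg fun i _ => mul_self_nonneg _

lemma euclid_norm (a : Fin m → ℝ) :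
    ‖(WithLp.equiv 2 (Fin m → ℝ)).symm a‖ = Real.sqrt (a ⬝ᵥ a) := by
  rw [EuclideanSpace.norm_eq]
  congr 1
  simp [dotProduct, Real.norm_eq_abs, sq_abs, pow_two]

lemma sqrt_dot_sq (a : Fin m → ℝ) : Real.sqrt (a ⬝ᵥ a) ^ 2 = a ⬝ᵥ a :=
  Real.sq_sqrt (dot_self_nonneg a)

lemma abs_dot_le (a b : Fin m → ℝ) :
    |a ⬝ᵥ b| ≤ Real.sqrt (a ⬝ᵥ a) * Real.sqrt (b ⬝ᵥ b) := by
  have h := abs_real_inner_le_norm ((WithLp.equiv 2 (Fin m → ℝ)).symm a)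
      ((WithLp.equiv 2 (Fin m → ℝ)).symm b)
  rw [euclid_norm, euclid_norm] at h
  have hinner : (inner ℝ ((WithLp.equiv 2 (Fin m → ℝ)).symm a)
      ((WithLp.equiv 2 (Fin m → ℝ)).symm b) : ℝ) = a ⬝ᵥ b := by
    simp [PiLp.inner_apply, dotProduct, mul_comm]
  rwa [hinner] at h

lemma matNorm_nonneg (E : Matrix (Fin m) (Fin m) ℝ) : 0 ≤ matNorm E := norm_nonneg _

lemma abs_mulVec_dot_le (E : Matrix (Fin m) (Fin m) ℝ) (a b : Fin m → ℝ) :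
    |E.mulVec a ⬝ᵥ b| ≤ matNorm E * (Real.sqrt (a ⬝ᵥ a) * Real.sqrt (b ⬝ᵥ b)) := by
  set a' := (WithLp.equiv 2 (Fin m → ℝ)).symm a
  set b' := (WithLp.equiv 2 (Fin m → ℝ)).symm b
  have key : E.mulVec a ⬝ᵥ b =
      (inner ℝ ((Matrix.toEuclideanCLM (𝕜 := ℝ) E) a') b' : ℝ) := by
    have happ : (Matrix.toEuclideanCLM (𝕜 := ℝ) E) a'
        = (WithLp.equiv 2 (Fin m → ℝ)).symm (E.mulVec a) := by
      exact Matrix.toEuclideanCLM_toLp E a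
    rw [happ]
    simp only [PiLp.inner_apply, RCLike.inner_apply, conj_trivial]
    rw [dotProduct_comm]; rfl
  rw [key]
  calc |(inner ℝ ((Matrix.toEuclideanCLM (𝕜 := ℝ) E) a') b' : ℝ)|
      ≤ ‖(Matrix.toEuclideanCLM (𝕜 := ℝ) E) a'‖ * ‖b'‖ := abs_real_inner_le_norm _ _
    _ ≤ (matNorm E * ‖a'‖) * ‖b'‖ := by
        apply mul_le_mul_of_nonneg_right _ (norm_nonneg _)
        exact ContinuousLinearMap.le_opNorm _ _
    _ = matNorm E * (Real.sqrt (a ⬝ᵥ a) * Real.sqrt (b ⬝ᵥ b)) := by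
        rw [euclid_norm, euclid_norm, mul_assoc]

lemma abs_dot_mulVec_self_le (E : Matrix (Fin m) (Fin m) ℝ) (a : Fin m → ℝ) :
    |a ⬝ᵥ E.mulVec a| ≤ matNorm E * (a ⬝ᵥ a) := by
  rw [dotProduct_comm]
  have h := abs_mulVec_dot_le E a a
  rwa [Real.mul_self_sqrt (dot_self_nonneg a)] at h

lemma mulVec_self_dot_le (M : Matrix (Fin m) (Fin m) ℝ) (hsym : Mᵀ = M)
    (hpsd : M.PosSemidef) (Lam : ℝ)
    (hub : ∀ y : Fin m → ℝ, y ⬝ᵥ M.mulVec y ≤ Lam * (y ⬝ᵥ y)) (u : Fin m → ℝ) :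
    (M.mulVec u) ⬝ᵥ (M.mulVec u) ≤ Lam * (u ⬝ᵥ M.mulVec u) := by
  set S := (open scoped MatrixOrder in CFC.sqrt M) with hS
  have hSsym : Sᵀ = S := by
    open scoped MatrixOrder in exact (CFC.sqrt_nonneg M).posSemidef.1
  have hSS : S * S = M := by
    open scoped MatrixOrder in exact CFC.sqrt_mul_sqrt_self M hpsd.nonneg
  have key : ∀ y : Fin m → ℝ, (S.mulVec y) ⬝ᵥ (S.mulVec y) = y ⬝ᵥ M.mulVec y := by
    intro y
    rw [dshift S (S.mulVec y) y, hSsym, Matrix.mulVec_mulVec, hSS,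
      dotProduct_comm]
  have h1 : (M.mulVec u) ⬝ᵥ (M.mulVec u) = (S.mulVec u) ⬝ᵥ M.mulVec (S.mulVec u) := by
    have hMu : M.mulVec u = S.mulVec (S.mulVec u) := by
      rw [Matrix.mulVec_mulVec, hSS]
    rw [hMu, key (S.mulVec u)]
  have h2 : u ⬝ᵥ M.mulVec u = (S.mulVec u) ⬝ᵥ (S.mulVec u) := (key u).symm
  rw [h1, h2]
  exact hub (S.mulVec u)

/-! ### Calculus helpers -/

def dotCLM (a : Fin m → ℝ) : (Fin m → ℝ) →L[ℝ] ℝ :=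
  ∑ k, a k • (ContinuousLinearMap.proj k)

@[simp] lemma dotCLM_apply (a h : Fin m → ℝ) : dotCLM a h = a ⬝ᵥ h := by
  simp [dotCLM, ContinuousLinearMap.sum_apply, dotProduct]

lemma hasFDerivAt_quad (N : Matrix (Fin m) (Fin m) ℝ) (hN : Nᵀ = N)
    (x₀ : Fin m → ℝ) :
    HasFDerivAt (fun x : Fin m → ℝ => N.mulVec x ⬝ᵥ x)
      (dotCLM ((2:ℝ) • N.mulVec x₀)) x₀ := by
  have h : ∀ x : Fin m → ℝ, N.mulVec x ⬝ᵥ x = ∑ i, (dotCLM (N i)) x * x i := by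
    intro x
    simp [dotProduct, Matrix.mulVec]
  have hder : HasFDerivAt (fun x : Fin m → ℝ => ∑ i, (dotCLM (N i)) x * x i)
      (∑ i, (((dotCLM (N i)) x₀) • (ContinuousLinearMap.proj i :
          (Fin m → ℝ) →L[ℝ] ℝ) + x₀ i • dotCLM (N i))) x₀ := by
    apply HasFDerivAt.fun_sum
    intro i _
    exact ((dotCLM (N i)).hasFDerivAt).mul ((ContinuousLinearMap.proj i :
      (Fin m → ℝ) →L[ℝ] ℝ).hasFDerivAt)
  have heq : (fun x : Fin m → ℝ => N.mulVec x ⬝ᵥ x)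
      = fun x : Fin m → ℝ => ∑ i, (dotCLM (N i)) x * x i := funext h
  rw [heq]
  refine hder.congr_fderiv ?_
  ext1 v
  simp only [ContinuousLinearMap.sum_apply, ContinuousLinearMap.add_apply,
    ContinuousLinearMap.smul_apply, ContinuousLinearMap.proj_apply, dotCLM_apply,
    smul_eq_mul]
  have h1 : ∑ i, ((N i ⬝ᵥ x₀) * v i + x₀ i * (N i ⬝ᵥ v))
      = N.mulVec x₀ ⬝ᵥ v + x₀ ⬝ᵥ N.mulVec v := by
    rw [Finset.sum_add_distrib]
    congr 1
  have h2 : x₀ ⬝ᵥ N.mulVec v = N.mulVec x₀ ⬝ᵥ v := by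
    rw [Matrix.dotProduct_mulVec, ← Matrix.vecMul_transpose, hN]
  rw [h1, h2]
  simp [smul_dotProduct, two_mul]

section HptCalc

variable {n : ℕ} (M : Matrix (Fin (2*n)) (Fin (2*n)) ℝ)

/-- derivative (as a CLM) of `q(z) = ⟨M⁻¹ z.1, z.1⟩`. -/
def DqC (z : Hpt n) : Hpt n →L[ℝ] ℝ :=
  (dotCLM ((2:ℝ) • M⁻¹.mulVec z.1)).comp
    (ContinuousLinearMap.fst ℝ (Fin (2*n) → ℝ) ℝ)

lemma hasFDerivAt_q (hN : (M⁻¹)ᵀ = M⁻¹) (z : Hpt n) :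
    HasFDerivAt (fun z : Hpt n => M⁻¹.mulVec z.1 ⬝ᵥ z.1) (DqC M z) z :=
  (hasFDerivAt_quad M⁻¹ hN z.1).comp z hasFDerivAt_fst

/-- derivative (as a CLM) of `phiM M`. -/
def DphiC (z : Hpt n) : Hpt n →L[ℝ] ℝ :=
  (2 * (M⁻¹.mulVec z.1 ⬝ᵥ z.1)) • DqC M z
    + (2 * z.2) • (ContinuousLinearMap.snd ℝ (Fin (2*n) → ℝ) ℝ)

lemma hasFDerivAt_phiM (hN : (M⁻¹)ᵀ = M⁻¹) (z : Hpt n) :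
    HasFDerivAt (phiM M) (DphiC M z) z := by
  have hq := hasFDerivAt_q M hN z
  have h1 := hq.mul hq
  have h2 : HasFDerivAt (fun z : Hpt n => z.2)
      (ContinuousLinearMap.snd ℝ (Fin (2*n) → ℝ) ℝ) z := hasFDerivAt_snd
  have h3 := h2.mul h2
  have h := h1.add h3
  have heq : phiM M = fun z : Hpt n =>
      (M⁻¹.mulVec z.1 ⬝ᵥ z.1) * (M⁻¹.mulVec z.1 ⬝ᵥ z.1) + z.2 * z.2 := by
    funext z; simp [phiM]; ring
  rw [heq]
  have hEq : ((M⁻¹.mulVec z.1 ⬝ᵥ z.1) • DqC M z + (M⁻¹.mulVec z.1 ⬝ᵥ z.1) • DqC M z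
      + (z.2 • ContinuousLinearMap.snd ℝ (Fin (2*n) → ℝ) ℝ
        + z.2 • ContinuousLinearMap.snd ℝ (Fin (2*n) → ℝ) ℝ)) = DphiC M z := by
    refine ContinuousLinearMap.ext fun y => ?_
    simp only [DphiC, ContinuousLinearMap.add_apply, ContinuousLinearMap.smul_apply,
      smul_eq_mul]
    ring
  exact hEq ▸ h

lemma continuous_phiM (hN : (M⁻¹)ᵀ = M⁻¹) : Continuous (phiM M) :=
  continuous_iff_continuousAt.mpr fun z =>
    (hasFDerivAt_phiM M hN z).differentiableAt.continuousAt

lemma hasFDerivAt_g (hN : (M⁻¹)ᵀ = M⁻¹) (α : ℝ) (hα : α ≠ 0) (z : Hpt n)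
    (hz : phiM M z ≠ 0) :
    HasFDerivAt (gfun M α) ((phiM M z ^ (-α-1 : ℝ)) • DphiC M z) z := by
  have h1 := (hasFDerivAt_phiM M hN z).rpow_const (p := -α) (Or.inl hz)
  have h2 := h1.const_mul (-(1/α))
  have heq : gfun M α = fun z : Hpt n => -(1/α) * phiM M z ^ (-α : ℝ) := rfl
  rw [heq]
  have hsc : (-(1/α)) * (-α * phiM M z ^ (-α-1 : ℝ)) = phiM M z ^ (-α-1 : ℝ) := by
    field_simp
  rw [smul_smul, hsc] at h2
  exact h2

lemma Xd_g (hN : (M⁻¹)ᵀ = M⁻¹) (α : ℝ) (hα : α ≠ 0) (z : Hpt n)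
    (hz : phiM M z ≠ 0) (j : Fin (2*n)) :
    Xd j (gfun M α) z = phiM M z ^ (-α-1 : ℝ) *
      (4 * (M⁻¹.mulVec z.1 ⬝ᵥ z.1) * M⁻¹.mulVec z.1 j
        + 4 * z.2 * (Jmat n).mulVec z.1 j) := by
  unfold Xd
  rw [(hasFDerivAt_g M hN α hα z hz).fderiv]
  simp only [ContinuousLinearMap.smul_apply, smul_eq_mul]
  congr 1
  unfold DphiC DqC Xvec
  simp only [ContinuousLinearMap.add_apply, ContinuousLinearMap.smul_apply,
    ContinuousLinearMap.comp_apply, ContinuousLinearMap.coe_fst',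
    ContinuousLinearMap.coe_snd', dotCLM_apply, smul_eq_mul,
    smul_dotProduct, dotProduct_single, Pi.smul_apply, mul_one]
  ring

/-- derivative (as a CLM) of `z ↦ w_j(z)`. -/
def DwC (z : Hpt n) (j : Fin (2*n)) : Hpt n →L[ℝ] ℝ :=
  ((4 * (M⁻¹.mulVec z.1 ⬝ᵥ z.1)) • ((dotCLM (M⁻¹ j)).comp
      (ContinuousLinearMap.fst ℝ (Fin (2*n) → ℝ) ℝ))
    + (M⁻¹.mulVec z.1 j) • ((4:ℝ) • DqC M z))
  + ((4 * z.2) • ((dotCLM ((Jmat n) j)).comp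
      (ContinuousLinearMap.fst ℝ (Fin (2*n) → ℝ) ℝ))
    + ((Jmat n).mulVec z.1 j) • ((4:ℝ) •
      (ContinuousLinearMap.snd ℝ (Fin (2*n) → ℝ) ℝ)))

lemma hasFDerivAt_w (hN : (M⁻¹)ᵀ = M⁻¹) (z : Hpt n) (j : Fin (2*n)) :
    HasFDerivAt (fun z : Hpt n => 4 * (M⁻¹.mulVec z.1 ⬝ᵥ z.1) * M⁻¹.mulVec z.1 j
        + 4 * z.2 * (Jmat n).mulVec z.1 j) (DwC M z j) z := by
  have hq := hasFDerivAt_q M hN z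
  have huj : HasFDerivAt (fun z : Hpt n => M⁻¹.mulVec z.1 j)
      ((dotCLM (M⁻¹ j)).comp (ContinuousLinearMap.fst ℝ (Fin (2*n) → ℝ) ℝ)) z := by
    have heq : (fun z : Hpt n => M⁻¹.mulVec z.1 j) = fun z : Hpt n => (dotCLM (M⁻¹ j)) z.1 := by
      funext z; simp [Matrix.mulVec]
    rw [heq]
    exact ((dotCLM (M⁻¹ j)).hasFDerivAt).comp z hasFDerivAt_fst
  have hvj : HasFDerivAt (fun z : Hpt n => (Jmat n).mulVec z.1 j)
      ((dotCLM ((Jmat n) j)).comp (ContinuousLinearMap.fst ℝ (Fin (2*n) → ℝ) ℝ)) z := by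
    have heq : (fun z : Hpt n => (Jmat n).mulVec z.1 j)
        = fun z : Hpt n => (dotCLM ((Jmat n) j)) z.1 := by
      funext z; simp [Matrix.mulVec]
    rw [heq]
    exact ((dotCLM ((Jmat n) j)).hasFDerivAt).comp z hasFDerivAt_fst
  have hsnd : HasFDerivAt (fun z : Hpt n => z.2)
      (ContinuousLinearMap.snd ℝ (Fin (2*n) → ℝ) ℝ) z := hasFDerivAt_snd
  exact ((hq.const_mul 4).mul huj).add ((hsnd.const_mul 4).mul hvj)

lemma XdXd_g (hN : (M⁻¹)ᵀ = M⁻¹) (α : ℝ) (hα : α ≠ 0) (ζ : Hpt n)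
    (hζ : phiM M ζ ≠ 0) (i j : Fin (2*n)) :
    Xd i (Xd j (gfun M α)) ζ =
      phiM M ζ ^ (-α-1 : ℝ) *
        (8 * (M⁻¹.mulVec ζ.1 i) * (M⁻¹.mulVec ζ.1 j)
          + 4 * (M⁻¹.mulVec ζ.1 ⬝ᵥ ζ.1) * M⁻¹ j i
          + 8 * ((Jmat n).mulVec ζ.1 i) * ((Jmat n).mulVec ζ.1 j)
          + 4 * ζ.2 * Jmat n j i)
      + (-α-1) * phiM M ζ ^ (-α-2 : ℝ) *
        (4 * (M⁻¹.mulVec ζ.1 ⬝ᵥ ζ.1) * M⁻¹.mulVec ζ.1 i + 4 * ζ.2 * (Jmat n).mulVec ζ.1 i) *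
        (4 * (M⁻¹.mulVec ζ.1 ⬝ᵥ ζ.1) * M⁻¹.mulVec ζ.1 j + 4 * ζ.2 * (Jmat n).mulVec ζ.1 j) := by
  have hopen : IsOpen {z : Hpt n | phiM M z ≠ 0} :=
    isOpen_compl_singleton.preimage (continuous_phiM M hN)
  have hmem : {z : Hpt n | phiM M z ≠ 0} ∈ nhds ζ := hopen.mem_nhds hζ
  have hev : (Xd j (gfun M α)) =ᶠ[nhds ζ]
      (fun z : Hpt n => phiM M z ^ (-α-1 : ℝ) *
        (4 * (M⁻¹.mulVec z.1 ⬝ᵥ z.1) * M⁻¹.mulVec z.1 j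
          + 4 * z.2 * (Jmat n).mulVec z.1 j)) :=
    Filter.eventuallyEq_of_mem hmem fun z hz => Xd_g M hN α hα z hz j
  have hXd : Xd i (Xd j (gfun M α)) ζ
      = fderiv ℝ (Xd j (gfun M α)) ζ (Xvec ζ.1 i) := rfl
  rw [hXd, hev.fderiv_eq]
  have hpow : HasFDerivAt (fun z : Hpt n => phiM M z ^ (-α-1 : ℝ))
      ((((-α-1) * phiM M ζ ^ ((-α-1) - 1 : ℝ))) • DphiC M ζ) ζ :=
    (hasFDerivAt_phiM M hN ζ).rpow_const (p := -α-1) (Or.inl hζ)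
  have hF := hpow.fun_mul (hasFDerivAt_w M hN ζ j)
  rw [hF.fderiv]
  have hexp : ((-α-1) - 1 : ℝ) = -α-2 := by ring
  rw [hexp]
  simp only [DwC, DphiC, DqC, Xvec, ContinuousLinearMap.add_apply,
    ContinuousLinearMap.smul_apply, ContinuousLinearMap.comp_apply,
    ContinuousLinearMap.coe_fst', ContinuousLinearMap.coe_snd', dotCLM_apply,
    smul_eq_mul, smul_dotProduct, dotProduct_single,
    Pi.smul_apply, mul_one]
  ring

end HptCalc


lemma dot_self_pos {m : ℕ} (u : Fin m → ℝ) (hu : u ≠ 0) : 0 < u ⬝ᵥ u := by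
  rcases (dot_self_nonneg u).lt_or_eq with h | h
  · exact h
  · exfalso
    apply hu
    funext i
    have hsum : ∑ j, u j * u j = 0 := h.symm
    have := (Finset.sum_eq_zero_iff_of_nonneg
      (fun j _ => mul_self_nonneg (u j))).mp hsum i (Finset.mem_univ i)
    have : u i = 0 := by nlinarith [this]
    simpa using this

lemma loewner_lower {m : ℕ} {P : Matrix (Fin m) (Fin m) ℝ} {c : ℝ}
    (h : (P - c • (1 : Matrix (Fin m) (Fin m) ℝ)).PosSemidef) (y : Fin m → ℝ) :
    c * (y ⬝ᵥ y) ≤ y ⬝ᵥ P.mulVec y := by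
  have h2 := h.dotProduct_mulVec_nonneg y
  simp only [star_trivial, Matrix.sub_mulVec, Matrix.smul_mulVec,
    Matrix.one_mulVec, dotProduct_sub, dotProduct_smul,
    smul_eq_mul] at h2
  linarith

lemma loewner_upper {m : ℕ} {P : Matrix (Fin m) (Fin m) ℝ} {c : ℝ}
    (h : (c • (1 : Matrix (Fin m) (Fin m) ℝ) - P).PosSemidef) (y : Fin m → ℝ) :
    y ⬝ᵥ P.mulVec y ≤ c * (y ⬝ᵥ y) := by
  have h2 := h.dotProduct_mulVec_nonneg y
  simp only [star_trivial, Matrix.sub_mulVec, Matrix.smul_mulVec,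
    Matrix.one_mulVec, dotProduct_sub, dotProduct_smul,
    smul_eq_mul] at h2
  linarith

lemma quad_expand {m : ℕ} (P : Matrix (Fin m) (Fin m) ℝ) (a b : ℝ) (y z : Fin m → ℝ) :
    (fun k => a * y k + b * z k) ⬝ᵥ P.mulVec (fun k => a * y k + b * z k)
      = a*a*(y ⬝ᵥ P.mulVec y) + a*b*(y ⬝ᵥ P.mulVec z) + a*b*(z ⬝ᵥ P.mulVec y)
        + b*b*(z ⬝ᵥ P.mulVec z) := by
  have hvec : (fun k => a * y k + b * z k) = a • y + b • z := by
    funext k; simp [smul_eq_mul]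
  rw [hvec, Matrix.mulVec_add, Matrix.mulVec_smul, Matrix.mulVec_smul]
  simp only [dotProduct_add, add_dotProduct, dotProduct_smul,
    smul_dotProduct, smul_eq_mul]
  ring

lemma trace_eq {m : ℕ} (A B : Matrix (Fin m) (Fin m) ℝ) :
    (A * B).trace = ∑ i, ∑ k, A i k * B k i := by
  rw [Matrix.trace]
  simp [Matrix.diag, Matrix.mul_apply]

lemma dot_mulVec_eq {m : ℕ} (A : Matrix (Fin m) (Fin m) ℝ) (y y' : Fin m → ℝ) :
    y ⬝ᵥ A.mulVec y' = ∑ i, ∑ k, y i * (A i k * y' k) := by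
  simp [dotProduct, Matrix.mulVec, Finset.mul_sum]

section TraceFormula

variable {n : ℕ}

lemma trace_formula (M : Matrix (Fin (2*n)) (Fin (2*n)) ℝ)
    (hN : (M⁻¹)ᵀ = M⁻¹) (α : ℝ) (hα : α ≠ 0) (ζ : Hpt n) (hζ : phiM M ζ ≠ 0)
    (A : Matrix (Fin (2*n)) (Fin (2*n)) ℝ) :
    (A * D2H (gfun M α) ζ).trace
      = phiM M ζ ^ (-α-1 : ℝ) *
          (8 * (M⁻¹.mulVec ζ.1 ⬝ᵥ A.mulVec (M⁻¹.mulVec ζ.1))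
            + 4 * (M⁻¹.mulVec ζ.1 ⬝ᵥ ζ.1) * (A * M⁻¹).trace
            + 8 * ((Jmat n).mulVec ζ.1 ⬝ᵥ A.mulVec ((Jmat n).mulVec ζ.1)))
        + (-α-1) * phiM M ζ ^ (-α-2 : ℝ) *
          ((fun k => 4 * (M⁻¹.mulVec ζ.1 ⬝ᵥ ζ.1) * M⁻¹.mulVec ζ.1 k
              + 4 * ζ.2 * (Jmat n).mulVec ζ.1 k) ⬝ᵥ
            A.mulVec (fun k => 4 * (M⁻¹.mulVec ζ.1 ⬝ᵥ ζ.1) * M⁻¹.mulVec ζ.1 k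
              + 4 * ζ.2 * (Jmat n).mulVec ζ.1 k)) := by
  classical
  have hEntry : ∀ k i, D2H (gfun M α) ζ k i
      = phiM M ζ ^ (-α-1 : ℝ) * (8 * (M⁻¹.mulVec ζ.1 k) * (M⁻¹.mulVec ζ.1 i)
          + 4 * (M⁻¹.mulVec ζ.1 ⬝ᵥ ζ.1) * M⁻¹ k i
          + 8 * ((Jmat n).mulVec ζ.1 k) * ((Jmat n).mulVec ζ.1 i))
        + ((-α-1) * phiM M ζ ^ (-α-2 : ℝ)) *
          ((4 * (M⁻¹.mulVec ζ.1 ⬝ᵥ ζ.1) * M⁻¹.mulVec ζ.1 k + 4 * ζ.2 * (Jmat n).mulVec ζ.1 k)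
            * (4 * (M⁻¹.mulVec ζ.1 ⬝ᵥ ζ.1) * M⁻¹.mulVec ζ.1 i
              + 4 * ζ.2 * (Jmat n).mulVec ζ.1 i)) := by
    intro k i
    show (Xd k (Xd i (gfun M α)) ζ + Xd i (Xd k (gfun M α)) ζ) / 2 = _
    rw [XdXd_g M hN α hα ζ hζ k i, XdXd_g M hN α hα ζ hζ i k]
    have hsymN : M⁻¹ i k = M⁻¹ k i := by
      have h := congrFun (congrFun hN k) i
      rw [Matrix.transpose_apply] at h
      exact h
    rw [Jmat_antisymm n i k, hsymN]
    ring
  rw [trace_eq, dot_mulVec_eq, dot_mulVec_eq, dot_mulVec_eq, trace_eq]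
  simp only [mul_add, Finset.mul_sum, ← Finset.sum_add_distrib]
  refine Finset.sum_congr rfl fun i _ => ?_
  refine Finset.sum_congr rfl fun k _ => ?_
  rw [hEntry k i]
  ring

end TraceFormula

end Stmt8Aux

open Stmt8Aux

set_option maxHeartbeats 2000000

/-- Lemma 3.6. Fix `0 < δ < 1/2`, `0 < λ ≤ 1 ≤ Λ` and a modulus `ω`.
There exists `ε₀ > 0`, depending only on `λ, Λ, Q, δ, ω`, such that for every open `Ω`,
every symplectic `A ∈ M_n(λ,Λ,Ω) ∩ C(Ω,ω)` and every `z₀ ∈ Ω`, the barrier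
`g = -(1/α)·φ_{A(z₀)}^{-α}` with `α = (Q-2)/4 + δ` satisfies
`-tr(A(z)·(D²_H g)(ζ)) ≥ 0` for all `z ∈ B_{ε₀}(z₀) ∩ Ω` and all `ζ ≠ 0`. -/
theorem stmt8 (n : ℕ) (hn : 1 ≤ n) (lam Lam δ : ℝ)
    (hlam : 0 < lam) (hlam1 : lam ≤ 1) (hLam1 : 1 ≤ Lam)
    (hδ : 0 < δ) (hδ' : δ < 1 / 2)
    (ω : ℝ → ℝ) (hω : IsModulus ω) :
    ∃ ε₀ > 0, SubsolProp n lam Lam δ ω ε₀ := by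
  classical
  obtain ⟨hmono, hbnd, hω0, htend⟩ := hω
  have hLampos : 0 < Lam := lt_of_lt_of_le one_pos hLam1
  have hinvpos : 0 < 1/lam := by positivity
  have hinv1 : 1 ≤ 1/lam := by rw [le_div_iff₀ hlam]; linarith only [hlam1]
  set αv : ℝ := (2 * (n : ℝ) + 2 - 2) / 4 + δ with hαv
  have hαval : αv = (n : ℝ)/2 + δ := by rw [hαv]; ring
  have hαpos : 0 < αv := by rw [hαval]; positivity
  have hα1 : 0 < αv + 1 := by linarith only [hαpos]
  set C₀ : ℝ := 32*(αv+1)*(Lam*(1/lam)) + 8*(1/lam) + 8*(n:ℝ)*(1/lam) + 8*Lam with hC₀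
  have hC₀pos : 0 < C₀ := by rw [hC₀]; positivity
  have he₀pos : 0 < 16*δ/C₀ := by positivity
  have h1 : ∀ᶠ s in nhdsWithin 0 (Set.Ioi (0:ℝ)), ω s < 16*δ/C₀ :=
    htend.eventually (gt_mem_nhds he₀pos)
  have h2 : ∀ᶠ s in nhdsWithin 0 (Set.Ioi (0:ℝ)), s < 1 := by
    have h2' : ∀ᶠ s in nhds (0:ℝ), s < 1 := by
      filter_upwards [Iio_mem_nhds (show (0:ℝ) < 1 by norm_num)] with s hs
      exact hs
    exact h2'.filter_mono nhdsWithin_le_nhds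
  have h3 : ∀ᶠ s in nhdsWithin 0 (Set.Ioi (0:ℝ)), 0 < s := by
    filter_upwards [self_mem_nhdsWithin] with s hs
    exact hs
  obtain ⟨ε₀, hωε, hε1, hεpos⟩ := (h1.and (h2.and h3)).exists
  refine ⟨ε₀, hεpos, ?_⟩
  intro Ω hΩ A hMcl hCcl hScl z₀ hz₀ z hz ζ hζ0
  obtain ⟨hMsymm, hMdet, hMlow, hMup⟩ := hMcl z₀ hz₀
  set Mm := A z₀ with hMm
  show 0 ≤ -(A z * D2H (gfun Mm αv) ζ).trace
  have hMsT : Mmᵀ = Mm := hMsymm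
  have hMunit : IsUnit Mm.det := by rw [hMdet]; exact isUnit_one
  have hMinv1 : Mm * Mm⁻¹ = 1 := Matrix.mul_nonsing_inv _ hMunit
  have hNsym : (Mm⁻¹)ᵀ = Mm⁻¹ := by rw [Matrix.transpose_nonsing_inv, hMsT]
  -- positivity of phiM at ζ
  have hφpos : 0 < phiM Mm ζ := by
    by_cases hx : ζ.1 = 0
    · have ht : ζ.2 ≠ 0 := by
        intro h
        apply hζ0
        rw [Prod.ext_iff]
        exact ⟨by simpa using hx, by simpa using h⟩
      have hre : phiM Mm ζ = (Mm⁻¹.mulVec ζ.1 ⬝ᵥ ζ.1)^2 + ζ.2^2 := rfl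
      rw [hre, hx]
      simp only [Matrix.mulVec_zero, dotProduct_zero, zero_dotProduct]
      have hsq : 0 < ζ.2^2 := by positivity
      linarith only [hsq]
    · have hu0 : Mm⁻¹.mulVec ζ.1 ≠ 0 := by
        intro h
        apply hx
        have hMux : Mm.mulVec (Mm⁻¹.mulVec ζ.1) = ζ.1 := by
          rw [Matrix.mulVec_mulVec, hMinv1, Matrix.one_mulVec]
        rw [h, Matrix.mulVec_zero] at hMux
        exact hMux.symm
      have hq1 := loewner_lower hMlow (Mm⁻¹.mulVec ζ.1)
      have hMux : Mm.mulVec (Mm⁻¹.mulVec ζ.1) = ζ.1 := by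
        rw [Matrix.mulVec_mulVec, hMinv1, Matrix.one_mulVec]
      rw [hMux] at hq1
      have hqpos : 0 < Mm⁻¹.mulVec ζ.1 ⬝ᵥ ζ.1 :=
        lt_of_lt_of_le (mul_pos hlam (dot_self_pos _ hu0)) hq1
      have hre : phiM Mm ζ = (Mm⁻¹.mulVec ζ.1 ⬝ᵥ ζ.1)^2 + ζ.2^2 := rfl
      rw [hre]
      have hq2 := pow_pos hqpos 2
      linarith only [hq2, sq_nonneg ζ.2]
  rw [trace_formula Mm hNsym αv hαpos.ne' ζ hφpos.ne' (A z)]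
  -- abbreviations
  set q := Mm⁻¹.mulVec ζ.1 ⬝ᵥ ζ.1 with hqdef
  set u := Mm⁻¹.mulVec ζ.1 with hudef
  set v := (Jmat n).mulVec ζ.1 with hvdef
  set w : Fin (2*n) → ℝ := fun k => 4*q*u k + 4*ζ.2*v k with hwdef
  set φv := phiM Mm ζ with hφdef
  have hφval : φv = q^2 + ζ.2^2 := by rw [hφdef, hqdef, hudef]; rfl
  set E := A z - Mm with hEdef
  set e := matNorm E with hedef
  -- modulus bound
  have heω : e ≤ ω ε₀ := by
    have h := hCcl.2 z₀ hz₀ ε₀ hεpos hε1 z hz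
    rw [← hMm] at h
    rw [← hEdef, ← hedef] at h
    exact h
  have he0 : (0:ℝ) ≤ e := by
    have := matNorm_nonneg E
    rw [← hedef] at this
    exact this
  have heC : e * C₀ ≤ 16*δ := by
    have h' : e ≤ 16*δ/C₀ := le_trans heω (le_of_lt hωε)
    calc e * C₀ ≤ (16*δ/C₀) * C₀ := mul_le_mul_of_nonneg_right h' hC₀pos.le
    _ = 16*δ := div_mul_cancel₀ _ hC₀pos.ne'
  -- decompositions
  have hAz : A z = Mm + E := by rw [hEdef]; abel
  have hds : ∀ y y' : Fin (2*n) → ℝ,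
      y ⬝ᵥ (A z).mulVec y' = y ⬝ᵥ Mm.mulVec y' + y ⬝ᵥ E.mulVec y' := by
    intro y y'
    rw [hAz, Matrix.add_mulVec, dotProduct_add]
  have hTr : (A z * Mm⁻¹).trace = 2*(n:ℝ) + (E * Mm⁻¹).trace := by
    rw [hAz, Matrix.add_mul, Matrix.trace_add, hMinv1, Matrix.trace_one]
    push_cast [Fintype.card_fin]
    ring
  -- key values of the M-part
  have hMux : Mm.mulVec u = ζ.1 := by
    rw [hudef, Matrix.mulVec_mulVec, hMinv1, Matrix.one_mulVec]
  have hUM : u ⬝ᵥ Mm.mulVec u = q := by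
    rw [hMux]
    try exact hqdef.symm
  have hxv : ζ.1 ⬝ᵥ v = 0 := by
    have h := dshift (Jmat n) ζ.1 ζ.1
    rw [Jmat_transpose, Matrix.neg_mulVec, neg_dotProduct] at h
    have h2 : (Jmat n).mulVec ζ.1 ⬝ᵥ ζ.1 = ζ.1 ⬝ᵥ (Jmat n).mulVec ζ.1 :=
      dotProduct_comm _ _
    rw [← hvdef] at h h2
    linarith only [h, h2]
  have hvx : v ⬝ᵥ ζ.1 = 0 := by rw [dotProduct_comm]; exact hxv
  have hUMv : u ⬝ᵥ Mm.mulVec v = 0 := by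
    rw [dshift Mm u v, hMsT, hMux]
    exact hxv
  have hVMu : v ⬝ᵥ Mm.mulVec u = 0 := by rw [hMux]; exact hvx
  have hVM : v ⬝ᵥ Mm.mulVec v = q := by
    have hsymp := hScl z₀ hz₀
    rw [← hMm] at hsymp
    have h := dshift ((Jmat n)ᵀ) ζ.1 (Mm.mulVec v)
    rw [Matrix.transpose_transpose] at h
    rw [← hvdef] at h
    rw [← h]
    conv_lhs => rw [hvdef]
    rw [Matrix.mulVec_mulVec, Matrix.mulVec_mulVec]
    try rw [← Matrix.mul_assoc]
    rw [← hsymp]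
    rw [dotProduct_comm, ← hudef]
    try exact hqdef.symm
  -- basic bounds
  have hlowu := loewner_lower hMlow u
  rw [hUM] at hlowu
  have hq0 : (0:ℝ) ≤ q := le_trans (mul_nonneg hlam.le (dot_self_nonneg u)) hlowu
  have huu' : u ⬝ᵥ u ≤ q*(1/lam) := by
    rw [mul_one_div, le_div_iff₀ hlam]
    linarith only [hlowu]
  have hMpsd : Mm.PosSemidef := by
    refine Matrix.PosSemidef.of_dotProduct_mulVec_nonneg ?_ ?_
    · show Mmᴴ = Mm
      ext i j
      rw [Matrix.conjTranspose_apply, star_trivial]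
      exact congrFun (congrFun hMsT i) j
    · intro y
      have h := loewner_lower hMlow y
      have h0 : 0 ≤ lam * (y ⬝ᵥ y) := mul_nonneg hlam.le (dot_self_nonneg y)
      simpa using le_trans h0 h
  have hupper : ∀ y : Fin (2*n) → ℝ, y ⬝ᵥ Mm.mulVec y ≤ Lam * (y ⬝ᵥ y) :=
    fun y => loewner_upper hMup y
  have hxx : ζ.1 ⬝ᵥ ζ.1 ≤ Lam * q := by
    have h := mulVec_self_dot_le Mm hMsT hMpsd Lam hupper u
    rw [hUM, hMux] at h
    exact h
  have hvv : v ⬝ᵥ v = ζ.1 ⬝ᵥ ζ.1 := by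
    have h := dshift (Jmat n) v ζ.1
    rw [← hvdef] at h
    rw [h]
    conv_lhs => rw [hvdef]
    rw [Matrix.mulVec_mulVec, Jmat_transpose_mul, Matrix.one_mulVec]
  have hvvle : v ⬝ᵥ v ≤ Lam * q := by rw [hvv]; exact hxx
  -- bound on w ⬝ᵥ w
  have hww : w ⬝ᵥ w ≤ 32*(Lam*(1/lam))*(q*φv) := by
    have h := quad_expand (1 : Matrix (Fin (2*n)) (Fin (2*n)) ℝ) (4*q) (4*ζ.2) u v
    simp only [Matrix.one_mulVec] at h
    rw [← hwdef] at h
    have hcomm : v ⬝ᵥ u = u ⬝ᵥ v := dotProduct_comm v u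
    have key : 32*(q*ζ.2*(u ⬝ᵥ v)) ≤ 16*(q^2*(u ⬝ᵥ u) + ζ.2^2*(v ⬝ᵥ v)) := by
      have h1 : q*ζ.2*(u ⬝ᵥ v) ≤ |q| * |ζ.2| * (Real.sqrt (u ⬝ᵥ u)*Real.sqrt (v ⬝ᵥ v)) := by
        calc q*ζ.2*(u ⬝ᵥ v) ≤ |q*ζ.2*(u ⬝ᵥ v)| := le_abs_self _
        _ = |q| * |ζ.2| * |u ⬝ᵥ v| := by rw [abs_mul, abs_mul]
        _ ≤ |q| * |ζ.2| * (Real.sqrt (u ⬝ᵥ u)*Real.sqrt (v ⬝ᵥ v)) := by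
            apply mul_le_mul_of_nonneg_left (abs_dot_le u v) (by positivity)
      have h2 := two_mul_le_add_sq (|q| * Real.sqrt (u ⬝ᵥ u)) (|ζ.2| * Real.sqrt (v ⬝ᵥ v))
      have h3 : (|q| * Real.sqrt (u ⬝ᵥ u))^2 = q^2*(u ⬝ᵥ u) := by
        rw [mul_pow, sq_abs, sqrt_dot_sq]
      have h4 : (|ζ.2| * Real.sqrt (v ⬝ᵥ v))^2 = ζ.2^2*(v ⬝ᵥ v) := by
        rw [mul_pow, sq_abs, sqrt_dot_sq]
      linarith only [h1, h2, h3, h4]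
    have c1 : q^2*(u ⬝ᵥ u) ≤ (Lam*(1/lam))*(q*q^2) := by
      calc q^2*(u ⬝ᵥ u) ≤ q^2*(q*(1/lam)) :=
            mul_le_mul_of_nonneg_left huu' (sq_nonneg q)
      _ ≤ (Lam*(1/lam))*(q*q^2) := by
          have hX : 0 ≤ q*q^2*(1/lam) := by positivity
          have h5 := mul_le_mul_of_nonneg_right hLam1 hX
          linarith only [h5]
    have c2 : ζ.2^2*(v ⬝ᵥ v) ≤ (Lam*(1/lam))*(q*ζ.2^2) := by
      calc ζ.2^2*(v ⬝ᵥ v) ≤ ζ.2^2*(Lam*q) :=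
            mul_le_mul_of_nonneg_left hvvle (sq_nonneg ζ.2)
      _ ≤ (Lam*(1/lam))*(q*ζ.2^2) := by
          have hY : 0 ≤ Lam*q*ζ.2^2 := by positivity
          have h5 := mul_le_mul_of_nonneg_right hinv1 hY
          linarith only [h5]
    rw [h, hφval, hcomm]
    linarith only [key, c1, c2]
  -- E-part bounds
  have hUEabs : |u ⬝ᵥ E.mulVec u| ≤ e*(q*(1/lam)) := by
    have h := abs_dot_mulVec_self_le E u
    rw [← hedef] at h
    exact le_trans h (mul_le_mul_of_nonneg_left huu' he0)
  have hVEabs : |v ⬝ᵥ E.mulVec v| ≤ e*(Lam*q) := by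
    have h := abs_dot_mulVec_self_le E v
    rw [← hedef] at h
    exact le_trans h (mul_le_mul_of_nonneg_left hvvle he0)
  have hWEabs : |w ⬝ᵥ E.mulVec w| ≤ e*(32*(Lam*(1/lam))*(q*φv)) := by
    have h := abs_dot_mulVec_self_le E w
    rw [← hedef] at h
    exact le_trans h (mul_le_mul_of_nonneg_left hww he0)
  have hTEabs : |(E * Mm⁻¹).trace| ≤ 2*(n:ℝ)*(e*(1/lam)) := by
    have hdiag : ∀ i : Fin (2*n), |(E * Mm⁻¹) i i| ≤ e*(1/lam) := by
      intro i
      have h1 : (E * Mm⁻¹) i i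
          = E.mulVec (Mm⁻¹.mulVec (Pi.single i 1)) ⬝ᵥ Pi.single i 1 := by
        rw [Matrix.mulVec_mulVec, dotProduct_single, mul_one, Matrix.mulVec_single]
        simp
      have h2 := abs_mulVec_dot_le E (Mm⁻¹.mulVec (Pi.single i 1)) (Pi.single i 1)
      rw [← hedef] at h2
      have hsing : (Pi.single i (1:ℝ)) ⬝ᵥ (Pi.single i 1) = 1 := by
        rw [dotProduct_single]
        simp
      have hMc : Mm.mulVec (Mm⁻¹.mulVec (Pi.single i 1)) = Pi.single i 1 := by
        rw [Matrix.mulVec_mulVec, hMinv1, Matrix.one_mulVec]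
      have hlow2 := loewner_lower hMlow (Mm⁻¹.mulVec (Pi.single i 1))
      rw [hMc] at hlow2
      have hci : (Mm⁻¹.mulVec (Pi.single i 1)) ⬝ᵥ Pi.single i (1:ℝ)
          = (Mm⁻¹.mulVec (Pi.single i 1)) i := by
        rw [dotProduct_single, mul_one]
      rw [hci] at hlow2
      have hile : (Mm⁻¹.mulVec (Pi.single i 1)) i
          ≤ Real.sqrt ((Mm⁻¹.mulVec (Pi.single i 1)) ⬝ᵥ (Mm⁻¹.mulVec (Pi.single i 1))) := by
        set cc := Mm⁻¹.mulVec (Pi.single i (1:ℝ)) with hcc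
        have hsq : cc i * cc i ≤ cc ⬝ᵥ cc := by
          have hre : cc ⬝ᵥ cc = ∑ j, cc j * cc j := rfl
          rw [hre]
          exact Finset.single_le_sum (f := fun j => cc j * cc j)
            (fun j _ => mul_self_nonneg _) (Finset.mem_univ i)
        calc cc i ≤ |cc i| := le_abs_self _
        _ = Real.sqrt (cc i * cc i) := (Real.sqrt_mul_self_eq_abs _).symm
        _ ≤ Real.sqrt (cc ⬝ᵥ cc) := Real.sqrt_le_sqrt hsq
      have hrle : Real.sqrt ((Mm⁻¹.mulVec (Pi.single i 1)) ⬝ᵥ (Mm⁻¹.mulVec (Pi.single i 1)))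
          ≤ 1/lam := by
        set r := Real.sqrt ((Mm⁻¹.mulVec (Pi.single i 1)) ⬝ᵥ (Mm⁻¹.mulVec (Pi.single i 1)))
          with hrdef
        have hr0 : 0 ≤ r := Real.sqrt_nonneg _
        have hrr : r^2 = (Mm⁻¹.mulVec (Pi.single i 1)) ⬝ᵥ (Mm⁻¹.mulVec (Pi.single i 1)) := by
          rw [hrdef]; exact sqrt_dot_sq _
        have hlr : lam * r^2 ≤ r := by
          rw [hrr]
          exact le_trans hlow2 hile
        rcases hr0.lt_or_eq with hpos | hzero
        · have h'' : (lam*r)*r ≤ 1*r := by linarith only [hlr]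
          have h' : lam * r ≤ 1 := le_of_mul_le_mul_right h'' hpos
          rw [le_div_iff₀ hlam]
          linarith only [h']
        · rw [← hzero]
          positivity
      rw [h1]
      refine le_trans h2 ?_
      rw [hsing, Real.sqrt_one, mul_one]
      exact mul_le_mul_of_nonneg_left hrle he0
    calc |(E * Mm⁻¹).trace| = |∑ i, (E * Mm⁻¹) i i| := by
          rw [Matrix.trace]
          simp [Matrix.diag]
    _ ≤ ∑ i, |(E * Mm⁻¹) i i| := Finset.abs_sum_le_sum_abs _ _
    _ ≤ ∑ _i : Fin (2*n), e*(1/lam) := Finset.sum_le_sum (fun i _ => hdiag i)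
    _ = 2*(n:ℝ)*(e*(1/lam)) := by
        rw [Finset.sum_const, Finset.card_univ, Fintype.card_fin]
        push_cast
        ring
  -- M-part of the w quadratic form
  have hWM : w ⬝ᵥ Mm.mulVec w = 16*q*φv := by
    have h := quad_expand Mm (4*q) (4*ζ.2) u v
    rw [← hwdef] at h
    rw [h, hUM, hUMv, hVMu, hVM, hφval]
    ring
  -- rewrite the goal
  simp only [hds, hTr, hUM, hVM, hWM]
  have hpow : φv ^ (-αv-1:ℝ) = φv ^ (-αv-2:ℝ) * φv := by
    have hre : (-αv-1 : ℝ) = (-αv-2) + 1 := by ring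
    rw [hre, Real.rpow_add_one hφpos.ne']
  have hpow2pos : 0 < φv ^ (-αv-2:ℝ) := Real.rpow_pos_of_pos hφpos _
  set UE := u ⬝ᵥ E.mulVec u with hUEd
  set VE := v ⬝ᵥ E.mulVec v with hVEd
  set WE := w ⬝ᵥ E.mulVec w with hWEd
  set TE := (E * Mm⁻¹).trace with hTEd
  clear_value αv C₀ q u v w φv E e UE VE WE TE
  have hkey : 0 ≤ (αv+1)*(16*q*φv + WE)
      - φv*(8*(q + UE) + 4*q*(2*(n:ℝ) + TE) + 8*(q + VE)) := by
    have hsplit : (αv+1)*(16*q*φv + WE)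
        - φv*(8*(q + UE) + 4*q*(2*(n:ℝ) + TE) + 8*(q + VE))
        = 16*δ*(q*φv) + ((αv+1)*WE - (φv*(8*UE) + φv*(4*q*TE) + φv*(8*VE))) := by
      rw [hαval]
      ring
    rw [hsplit]
    have hqφ : 0 ≤ q*φv := mul_nonneg hq0 hφpos.le
    have b1 : -(32*(αv+1)*(Lam*(1/lam))*(e*(q*φv))) ≤ (αv+1)*WE := by
      have hle := (abs_le.mp hWEabs).1
      have h2 := mul_le_mul_of_nonneg_left hle hα1.le
      linarith only [h2]
    have b2 : φv*(8*UE) ≤ 8*(1/lam)*(e*(q*φv)) := by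
      have hle : UE ≤ e*(q*(1/lam)) := le_trans (le_abs_self _) hUEabs
      have h2 := mul_le_mul_of_nonneg_left hle hφpos.le
      linarith only [h2]
    have b3 : φv*(4*q*TE) ≤ 8*(n:ℝ)*(1/lam)*(e*(q*φv)) := by
      have s1 : TE ≤ 2*(n:ℝ)*(e*(1/lam)) := le_trans (le_abs_self _) hTEabs
      have s2 : 4*q*TE ≤ 4*q*(2*(n:ℝ)*(e*(1/lam))) := by
        apply mul_le_mul_of_nonneg_left s1
        linarith only [hq0]
      have s3 := mul_le_mul_of_nonneg_left s2 hφpos.le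
      linarith only [s3]
    have b4 : φv*(8*VE) ≤ 8*Lam*(e*(q*φv)) := by
      have hle : VE ≤ e*(Lam*q) := le_trans (le_abs_self _) hVEabs
      have h2 := mul_le_mul_of_nonneg_left hle hφpos.le
      linarith only [h2]
    have bC : 32*(αv+1)*(Lam*(1/lam))*(e*(q*φv)) + 8*(1/lam)*(e*(q*φv))
        + 8*(n:ℝ)*(1/lam)*(e*(q*φv)) + 8*Lam*(e*(q*φv)) ≤ 16*δ*(q*φv) := by
      have h2 := mul_le_mul_of_nonneg_right heC hqφ
      have h3 : (e*C₀)*(q*φv) = 32*(αv+1)*(Lam*(1/lam))*(e*(q*φv)) + 8*(1/lam)*(e*(q*φv))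
          + 8*(n:ℝ)*(1/lam)*(e*(q*φv)) + 8*Lam*(e*(q*φv)) := by
        rw [hC₀]
        ring
      have h4 : 16*δ*(q*φv) = (16*δ)*(q*φv) := by ring
      rw [← h3]
      linarith only [h2]
    linarith only [b1, b2, b3, b4, bC]
  have hgoal : -(φv ^ (-αv-1:ℝ)
        * (8*(q + UE) + 4*q*(2*(n:ℝ) + TE) + 8*(q + VE))
      + (-αv-1) * φv ^ (-αv-2:ℝ) * (16*q*φv + WE))
      = φv ^ (-αv-2:ℝ) * ((αv+1)*(16*q*φv + WE)
        - φv*(8*(q + UE) + 4*q*(2*(n:ℝ) + TE) + 8*(q + VE))) := by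
    rw [hpow]
    ring
  rw [hgoal]
  exact mul_nonneg hpow2pos.le hkey

end
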